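/- For every integer i ≥ 2 with i ≠ 6, there exists a prime r such that the multiplicative order of 2 modulo r is exactly i (equivalently, r divides 2^i − 1 but r does not divide 2^j − 1 for any 1 ≤ j < i). -/

import Mathlib

open Polynomial Finset

namespace ZsigAux

lemma two_pow_gap : ∀ q : ℕ, 5 ≤ q → q < 2 ^ (q - 2) := by
  intro q hq
  induction q, hq using Nat.le_induction with
  | base => decide
  | succ n hn ih =>
    have h2 : n + 1 - 2 = (n - 2) + 1 := by omega
    rw [h2, pow_succ]
    omega

lemma pow_ineq5 {q y : ℕ} (hq : 5 ≤ q) (hy : 2 ≤ y) : q * y + q + 1 < y ^ q := by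
  have h1 : 2 ^ (q - 1) ≤ y ^ (q - 1) := Nat.pow_le_pow_left hy _
  have h2 : y ^ q = y ^ (q - 1) * y := by
    rw [← pow_succ]; congr 1; omega
  have h3 : 2 ^ (q - 1) = 2 * 2 ^ (q - 2) := by
    rw [← pow_succ']; congr 1; omega
  have h4 := two_pow_gap q hq
  have h5 : 2 * 2 ^ (q - 2) * y ≤ y ^ q := by
    rw [h2, ← h3]
    exact Nat.mul_le_mul_right y h1
  nlinarith

lemma pow_ineq3 {y : ℕ} (hy : 8 ≤ y) : 3 * y + 3 + 1 < y ^ 3 := by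
  have h : 64 * y ≤ y ^ 3 := by
    have h1 : 8 * 8 * y ≤ y * y * y :=
      Nat.mul_le_mul (Nat.mul_le_mul hy hy) (le_refl y)
    calc 64 * y = 8 * 8 * y := by ring
    _ ≤ y * y * y := h1
    _ = y ^ 3 := by ring
  have h2 : 3 * y + 3 + 1 < 64 * y := by omega
  omega

lemma one_add_pow {R : Type*} [CommRing R] {α : R} (h : α * α = 0) (j : ℕ) :
    (1 + α) ^ j = 1 + (j : R) * α := by
  induction j with
  | zero => simp
  | succ j ih =>
    rw [pow_succ, ih]
    have hr : (1 + (j : R) * α) * (1 + α) = 1 + ((j : R) + 1) * α + (j : R) * (α * α) := by ring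
    rw [hr, h, mul_zero, add_zero, Nat.cast_succ]

lemma eval_cyclotomic_pow {q : ℕ} (hq : q.Prime) (m : ℕ) :
    ∀ k, 1 ≤ k → ∀ x : ℤ, (cyclotomic (q ^ k * m) ℤ).eval x
      = (cyclotomic (q * m) ℤ).eval (x ^ q ^ (k - 1)) := by
  intro k hk
  induction k, hk using Nat.le_induction with
  | base => intro x; simp
  | succ k hk ih =>
    intro x
    have hdvd : q ∣ q ^ k * m := Dvd.dvd.mul_right (dvd_pow_self q (by omega)) m
    have h1 : q ^ (k + 1) * m = (q ^ k * m) * q := by ring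
    rw [h1, ← cyclotomic_expand_eq_cyclotomic hq hdvd ℤ, expand_eval, ih (x ^ q), ← pow_mul]
    have h2 : q * q ^ (k - 1) = q ^ (k + 1 - 1) := by
      rw [← pow_succ']
      congr 1
      omega
    rw [h2]

lemma cyclotomic_mul_dvd {n s : ℕ} (hs : 0 < s) (hn : 0 < n) (hsn : s ∣ n) (hlt : s < n) :
    cyclotomic n ℤ * (X ^ s - 1) ∣ X ^ n - 1 := by
  rw [← prod_cyclotomic_eq_X_pow_sub_one hn ℤ, ← prod_cyclotomic_eq_X_pow_sub_one hs ℤ]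
  have hsub : insert n s.divisors ⊆ n.divisors := by
    intro d hd
    rcases Finset.mem_insert.mp hd with rfl | hd
    · exact Nat.mem_divisors_self _ hn.ne'
    · exact Nat.divisors_subset_of_dvd hn.ne' hsn hd
  have hnotmem : n ∉ s.divisors := by
    intro h
    have := Nat.le_of_dvd hs (Nat.mem_divisors.mp h).1
    omega
  calc cyclotomic n ℤ * ∏ i ∈ s.divisors, cyclotomic i ℤ
      = ∏ i ∈ insert n s.divisors, cyclotomic i ℤ :=
        (Finset.prod_insert (f := fun i => cyclotomic i ℤ) hnotmem).symm
    _ ∣ ∏ i ∈ n.divisors, cyclotomic i ℤ := Finset.prod_dvd_prod_of_subset _ _ _ hsub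

lemma sq_not_dvd_geom {q : ℕ} (hq : Nat.Prime q) (hq2 : q ≠ 2) {s : ℕ}
    (h : (q : ℤ) ∣ 2 ^ s - 1) :
    ¬ ((q : ℤ) ^ 2 ∣ ∑ j ∈ Finset.range q, ((2 : ℤ) ^ s) ^ j) := by
  intro hdvd
  set R := ZMod (q ^ 2) with hR
  have hq2' : ((q : ℤ) ^ 2) = ((q ^ 2 : ℕ) : ℤ) := by push_cast; ring
  set α : R := (((2 : ℤ) ^ s - 1 : ℤ) : R) with hα
  have hαsq : α * α = 0 := by
    rw [hα, ← Int.cast_mul, ZMod.intCast_zmod_eq_zero_iff_dvd, ← hq2']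
    calc ((q : ℤ) ^ 2) = q * q := sq (q : ℤ)
    _ ∣ (2 ^ s - 1) * (2 ^ s - 1) := mul_dvd_mul h h
  have hqα : (q : R) * α = 0 := by
    have hd : ((q : ℤ) ^ 2) ∣ (q : ℤ) * (2 ^ s - 1) := by
      rw [sq]; exact mul_dvd_mul_left _ h
    have h0 : (((q : ℤ) * (2 ^ s - 1) : ℤ) : R) = 0 := by
      rw [ZMod.intCast_zmod_eq_zero_iff_dvd, ← hq2']; exact hd
    rw [hα]
    push_cast at h0 ⊢
    rw [Int.cast_mul, Int.cast_sub, Int.cast_pow] at h0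
    push_cast at h0
    linear_combination h0
  have hx : (2 : R) ^ s = 1 + α := by
    rw [hα]; push_cast; ring
  have hsum : ((∑ j ∈ Finset.range q, ((2 : ℤ) ^ s) ^ j : ℤ) : R) = (q : R) := by
    rw [Int.cast_sum]
    push_cast
    rw [hx]
    calc ∑ j ∈ Finset.range q, (1 + α) ^ j
        = ∑ j ∈ Finset.range q, (1 + (j : R) * α) :=
          Finset.sum_congr rfl fun j _ => one_add_pow hαsq j
      _ = q + (∑ j ∈ Finset.range q, (j : R)) * α := by
          rw [Finset.sum_add_distrib, Finset.sum_mul]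
          simp [Finset.sum_const]
      _ = q + ((q * (q - 1) / 2 : ℕ) : R) * α := by
          rw [← Nat.cast_sum, Finset.sum_range_id]
      _ = (q : R) := by
          have hodd : 2 ∣ q - 1 := by
            have := hq.two_le
            rcases hq.eq_two_or_odd with h' | h'
            · exact absurd h' hq2
            · omega
          have heq : q * (q - 1) / 2 = (q - 1) / 2 * q := by
            rw [Nat.mul_div_assoc q hodd, mul_comm]
          rw [heq, Nat.cast_mul, mul_assoc, hqα, mul_zero, add_zero]
  have hzero : ((∑ j ∈ Finset.range q, ((2 : ℤ) ^ s) ^ j : ℤ) : R) = 0 := by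
    rw [ZMod.intCast_zmod_eq_zero_iff_dvd, ← hq2']
    exact hdvd
  rw [hsum] at hzero
  have hdq : (q ^ 2 : ℕ) ∣ q := (ZMod.natCast_eq_zero_iff q (q ^ 2)).mp hzero
  have := Nat.le_of_dvd hq.pos hdq
  nlinarith [hq.two_le]

lemma orderOf_eq_of_not_dvd {n r : ℕ} (hn : 0 < n) (hr : Nat.Prime r)
    (h : (r : ℤ) ∣ (cyclotomic n ℤ).eval 2) (hrn : ¬ r ∣ n) :
    orderOf (2 : ZMod r) = n := by
  haveI : Fact (Nat.Prime r) := ⟨hr⟩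
  haveI : NeZero (n : ZMod r) := ⟨by
    rw [Ne, ZMod.natCast_eq_zero_iff]
    exact hrn⟩
  have hroot : (cyclotomic n (ZMod r)).IsRoot 2 := by
    have happ := cyclotomic.eval_apply (2 : ℤ) n (Int.castRingHom (ZMod r))
    rw [IsRoot.def]
    have h0 : (((cyclotomic n ℤ).eval 2 : ℤ) : ZMod r) = 0 := by
      rw [ZMod.intCast_zmod_eq_zero_iff_dvd]
      exact_mod_cast h
    have h2 : ((Int.castRingHom (ZMod r)) (2 : ℤ)) = (2 : ZMod r) := by
      simp
    rw [h2] at happ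
    rw [happ]
    exact h0
  have := (isRoot_cyclotomic_iff).mp hroot
  exact this.eq_orderOf.symm

lemma bad_prime_facts {i q : ℕ} (hi : 2 ≤ i) (hi6 : i ≠ 6) (hq : Nat.Prime q)
    (hqe : (q : ℤ) ∣ (cyclotomic i ℤ).eval 2) (hqi : q ∣ i) :
    (∀ r : ℕ, Nat.Prime r → r ∣ i → r ≠ q → r < q) ∧
    ¬ ((q : ℤ) ^ 2 ∣ (cyclotomic i ℤ).eval 2) ∧
    (q : ℤ) < (cyclotomic i ℤ).eval 2 := by
  haveI : Fact (Nat.Prime q) := ⟨hq⟩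
  set k := i.factorization q with hk
  set m := i / q ^ k with hm
  have hi0 : i ≠ 0 := by omega
  have hik : q ^ k * m = i := Nat.ordProj_mul_ordCompl_eq_self i q
  have hqm : ¬ q ∣ m := Nat.not_dvd_ordCompl hq hi0
  have hk1 : 1 ≤ k := hq.factorization_pos_of_dvd hi0 hqi
  have hm0 : 0 < m := by
    rcases Nat.eq_zero_or_pos m with h | h
    · rw [h, mul_zero] at hik; omega
    · exact h
  -- e divides 2^i - 1
  have hedvd : (cyclotomic i ℤ).eval 2 ∣ 2 ^ i - 1 := by
    have := eval_dvd (x := (2:ℤ)) (cyclotomic.dvd_X_pow_sub_one i ℤ)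
    simpa using this
  have hq2 : q ≠ 2 := by
    intro h
    have h1 : (q : ℤ) ∣ 2 ^ i - 1 := hqe.trans hedvd
    have h2 : (q : ℤ) ∣ 2 ^ i := by
      rw [h]; push_cast; exact dvd_pow_self (2 : ℤ) (by omega : i ≠ 0)
    have h3 : (q : ℤ) ∣ 1 := by
      have hd := dvd_sub h2 h1
      rw [show (2 : ℤ) ^ i - (2 ^ i - 1) = 1 by ring] at hd
      exact hd
    rw [h] at h3
    norm_num at h3
  -- primitive root structure
  haveI : NeZero (m : ZMod q) := ⟨by
    rw [Ne, ZMod.natCast_eq_zero_iff]; exact hqm⟩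
  have hroot : (cyclotomic (q ^ k * m) (ZMod q)).IsRoot 2 := by
    rw [hik]
    have happ := cyclotomic.eval_apply (2 : ℤ) i (Int.castRingHom (ZMod q))
    rw [IsRoot.def]
    have h0 : (((cyclotomic i ℤ).eval 2 : ℤ) : ZMod q) = 0 := by
      rw [ZMod.intCast_zmod_eq_zero_iff_dvd]
      exact_mod_cast hqe
    have h2 : ((Int.castRingHom (ZMod q)) (2 : ℤ)) = (2 : ZMod q) := by simp
    rw [h2] at happ
    rw [happ]
    exact h0
  have hprim : IsPrimitiveRoot (2 : ZMod q) m :=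
    (isRoot_cyclotomic_prime_pow_mul_iff_of_charP).mp hroot
  have h2ne : (2 : ZMod q) ≠ 0 := by
    have : ((2 : ℕ) : ZMod q) ≠ 0 := by
      rw [Ne, ZMod.natCast_eq_zero_iff]
      intro hd
      exact hq2 ((Nat.prime_dvd_prime_iff_eq hq Nat.prime_two).mp hd)
    exact_mod_cast this
  have hmdvd : m ∣ q - 1 := by
    rw [hprim.eq_orderOf]
    exact orderOf_dvd_of_pow_eq_one (ZMod.pow_card_sub_one_eq_one h2ne)
  have hm2 : 2 ≤ m := by
    by_contra hlt
    have hm1 : m = 1 := by omega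
    have h1 : (2 : ZMod q) = 1 := by
      have := hprim.pow_eq_one
      rwa [hm1, pow_one] at this
    have h1' : ((2 : ℕ) : ZMod q) = ((1 : ℕ) : ZMod q) := by push_cast; exact_mod_cast h1
    rw [ZMod.natCast_eq_natCast_iff] at h1'
    have hq3 : 3 ≤ q := by
      have := hq.two_le
      rcases Nat.lt_or_ge q 3 with h | h
      · interval_cases q
        · exact absurd rfl hq2
      · exact h
    unfold Nat.ModEq at h1'
    rw [Nat.mod_eq_of_lt (by omega), Nat.mod_eq_of_lt (by omega)] at h1'
    omega
  -- largest prime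
  have hmax : ∀ r : ℕ, Nat.Prime r → r ∣ i → r ≠ q → r < q := by
    intro r hr hri hrq
    have hrqm : r ∣ q ^ k * m := hik ▸ hri
    have hqpos := hq.two_le
    rcases (Nat.Prime.dvd_mul hr).mp hrqm with h | h
    · exact absurd ((Nat.prime_dvd_prime_iff_eq hr hq).mp (hr.dvd_of_dvd_pow h)) hrq
    · have h1 := Nat.le_of_dvd hm0 h
      have h2 := Nat.le_of_dvd (by omega : 0 < q - 1) hmdvd
      have := hr.two_le
      omega
  -- setup s and Q
  set s := q ^ (k - 1) * m with hs
  have hqs : q * s = i := by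
    rw [hs, ← mul_assoc, ← pow_succ']
    rw [show k - 1 + 1 = k by omega]
    exact hik
  have hs0 : 0 < s := Nat.mul_pos (Nat.pow_pos hq.pos) hm0
  have hslt : s < i := by
    rw [← hqs]
    have := hq.two_le
    nlinarith
  have hsdvd : s ∣ i := Dvd.intro_left q hqs
  have hdm : (q : ℤ) ∣ 2 ^ m - 1 := by
    have hpow : (2 : ZMod q) ^ m = 1 := hprim.pow_eq_one
    have : ((2 ^ m - 1 : ℤ) : ZMod q) = 0 := by
      push_cast
      simp [hpow]
    rwa [ZMod.intCast_zmod_eq_zero_iff_dvd] at this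
  have hds : (q : ℤ) ∣ 2 ^ s - 1 := by
    obtain ⟨t, ht⟩ : m ∣ s := dvd_mul_left m (q ^ (k - 1))
    refine hdm.trans ?_
    have := sub_dvd_pow_sub_pow ((2:ℤ) ^ m) 1 t
    rw [one_pow, ← pow_mul, ← ht] at this
    exact this
  set Q : ℤ := ∑ j ∈ Finset.range q, ((2 : ℤ) ^ s) ^ j with hQ
  have hQs : Q * (2 ^ s - 1) = 2 ^ i - 1 := by
    rw [hQ, geom_sum_mul, ← pow_mul, mul_comm s q, hqs]
  have heQ : (cyclotomic i ℤ).eval 2 ∣ Q := by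
    have hpd := cyclotomic_mul_dvd hs0 (by omega : 0 < i) hsdvd hslt
    have hev := eval_dvd (x := (2:ℤ)) hpd
    simp only [eval_mul, eval_sub, eval_pow, eval_X, eval_one] at hev
    rw [← hQs] at hev
    have hne : (2 : ℤ) ^ s - 1 ≠ 0 := by
      have : (1:ℤ) < 2 ^ s := by
        calc (1:ℤ) < 2 := one_lt_two
        _ = 2 ^ 1 := (pow_one 2).symm
        _ ≤ 2 ^ s := pow_le_pow_right₀ one_le_two hs0
      omega
    exact (mul_dvd_mul_iff_right hne).mp hev
  have hsqQ : ¬ ((q : ℤ) ^ 2 ∣ Q) := sq_not_dvd_geom hq hq2 hds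
  have hsqe : ¬ ((q : ℤ) ^ 2 ∣ (cyclotomic i ℤ).eval 2) := fun hd => hsqQ (hd.trans heQ)
  -- size bound
  set y := 2 ^ (q ^ (k - 1)) with hy
  have hy2 : 2 ≤ y := by
    rw [hy]
    calc 2 = 2 ^ 1 := (pow_one 2).symm
    _ ≤ 2 ^ q ^ (k - 1) := Nat.pow_le_pow_right (by norm_num) (Nat.pow_pos hq.pos)
  have hiy : q * y + q + 1 < y ^ q := by
    rcases Nat.lt_or_ge q 5 with h5 | h5
    · -- q = 3, m = 2, k ≥ 2
      have hq3 : q = 3 := by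
        have h2le := hq.two_le
        interval_cases q
        · exact absurd rfl hq2
        · rfl
        · exact absurd hq (by norm_num)
      have hm' : m = 2 := by
        rw [hq3] at hmdvd
        have := Nat.le_of_dvd (by norm_num) hmdvd
        omega
      have hk2 : 2 ≤ k := by
        by_contra hk2
        have hk1' : k = 1 := by omega
        rw [hk1', hq3, hm', pow_one] at hik
        omega
      have hy8 : 8 ≤ y := by
        rw [hy, hq3]
        calc 8 = 2 ^ 3 := by norm_num
        _ ≤ 2 ^ 3 ^ (k - 1) := Nat.pow_le_pow_right (by norm_num)
            (by calc 3 = 3 ^ 1 := (pow_one 3).symm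
                _ ≤ 3 ^ (k - 1) := Nat.pow_le_pow_right (by norm_num) (by omega))
      rw [hq3]
      exact pow_ineq3 hy8
    · exact pow_ineq5 h5 hy2
  -- real chain
  have hEE : (cyclotomic i ℤ).eval 2 = (cyclotomic (q * m) ℤ).eval ((2:ℤ) ^ q ^ (k - 1)) := by
    rw [← hik]
    exact eval_cyclotomic_pow hq m k hk1 2
  set t := m.totient with htdef
  have ht0 : t ≠ 0 := (Nat.totient_pos.mpr hm0).ne'
  set Y : ℝ := (y : ℝ) with hYdef
  have hY1 : (1:ℝ) < Y := by
    rw [hYdef]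
    exact_mod_cast by omega
  have hYq1 : (1:ℝ) < Y ^ q := one_lt_pow₀ hY1 hq.pos.ne'
  have hee : (((cyclotomic i ℤ).eval 2 : ℤ) : ℝ) = eval Y (cyclotomic (q * m) ℝ) := by
    rw [hEE]
    have h := cyclotomic.eval_apply ((2:ℤ) ^ q ^ (k - 1)) (q * m) (Int.castRingHom ℝ)
    have hYeq : ((Int.castRingHom ℝ) ((2:ℤ) ^ q ^ (k - 1))) = Y := by
      simp only [Int.coe_castRingHom, hYdef, hy]
      push_cast
      ring
    rw [hYeq] at h
    rw [h]
    simp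
  have hexp : eval Y (cyclotomic (m * q) ℝ) * eval Y (cyclotomic m ℝ)
      = eval (Y ^ q) (cyclotomic m ℝ) := by
    have h := cyclotomic_expand_eq_cyclotomic_mul hq hqm ℝ
    have h2 := congrArg (eval Y) h
    rw [expand_eval, eval_mul] at h2
    exact h2.symm
  have h1 : (Y ^ q - 1) ^ t < eval (Y ^ q) (cyclotomic m ℝ) :=
    sub_one_pow_totient_lt_cyclotomic_eval hm2 hYq1
  have h2 : eval Y (cyclotomic m ℝ) ≤ (Y + 1) ^ t :=
    cyclotomic_eval_le_add_one_pow_totient hY1 m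
  have h3 : 0 < eval Y (cyclotomic m ℝ) := cyclotomic_pos' m hY1
  have h4 : 0 < eval Y (cyclotomic (m * q) ℝ) := cyclotomic_pos' _ hY1
  have hq1 : (q : ℝ) * (Y + 1) < Y ^ q - 1 := by
    have : ((q * y + q + 1 : ℕ) : ℝ) < ((y ^ q : ℕ) : ℝ) := by exact_mod_cast hiy
    push_cast at this
    rw [hYdef]
    push_cast
    nlinarith
  have hYpos : (0:ℝ) < (Y + 1) ^ t := pow_pos (by linarith) t
  have hqY : (0:ℝ) ≤ (q : ℝ) * (Y + 1) := by positivity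
  have hchain : (q : ℝ) * (Y + 1) ^ t < eval Y (cyclotomic (m * q) ℝ) * (Y + 1) ^ t := by
    calc (q : ℝ) * (Y + 1) ^ t ≤ (q : ℝ) ^ t * (Y + 1) ^ t := by
          have : (q:ℝ) ≤ (q:ℝ) ^ t := le_self_pow₀ (by exact_mod_cast hq.one_lt.le) ht0
          nlinarith
      _ = ((q : ℝ) * (Y + 1)) ^ t := (mul_pow _ _ _).symm
      _ < (Y ^ q - 1) ^ t := pow_lt_pow_left₀ hq1 hqY ht0
      _ < eval (Y ^ q) (cyclotomic m ℝ) := h1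
      _ = eval Y (cyclotomic (m * q) ℝ) * eval Y (cyclotomic m ℝ) := hexp.symm
      _ ≤ eval Y (cyclotomic (m * q) ℝ) * (Y + 1) ^ t := by nlinarith
  have hlt : (q : ℝ) < eval Y (cyclotomic (m * q) ℝ) :=
    lt_of_mul_lt_mul_right hchain hYpos.le
  have hfin : (q : ℝ) < (((cyclotomic i ℤ).eval 2 : ℤ) : ℝ) := by
    rw [hee, mul_comm q m]
    exact hlt
  exact ⟨hmax, hsqe, by exact_mod_cast hfin⟩

end ZsigAux

/-- **Zsigmondy, base 2.** For every integer `i ≥ 2` with `i ≠ 6`, there is a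
prime `r` such that the multiplicative order of `2` modulo `r` is exactly `i`. -/
theorem zsigmondy_base_two (i : ℕ) (hi : 2 ≤ i) (hi6 : i ≠ 6) :
    ∃ r : ℕ, r.Prime ∧ orderOf (2 : ZMod r) = i := by
  by_contra hcon
  push_neg at hcon
  have hi0 : 0 < i := by omega
  set e : ℤ := (Polynomial.cyclotomic i ℤ).eval 2 with he
  have hepos : 0 < e := Polynomial.cyclotomic_pos' i (by norm_num : (1:ℤ) < 2)
  have he1 : 1 < e := by
    have h := Polynomial.sub_one_lt_natAbs_cyclotomic_eval (n := i) (q := 2)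
      (by omega) (by norm_num)
    have : (1 : ℕ) < e.natAbs := by simpa using h
    omega
  have hbad : ∀ q : ℕ, q.Prime → (q : ℤ) ∣ e → q ∣ i := by
    intro q hq hqe
    by_contra hqi
    exact hcon q hq (ZsigAux.orderOf_eq_of_not_dvd hi0 hq hqe hqi)
  set c : ℕ := e.toNat with hc
  have hcast : (c : ℤ) = e := Int.toNat_of_nonneg hepos.le
  have hc2 : 2 ≤ c := by omega
  set p := c.minFac with hp
  have hpp : p.Prime := Nat.minFac_prime (by omega : c ≠ 1)
  have hpc : p ∣ c := Nat.minFac_dvd c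
  have hpe : (p : ℤ) ∣ e := by
    rw [← hcast]
    exact_mod_cast Int.natCast_dvd_natCast.mpr hpc
  have hpi := hbad p hpp hpe
  obtain ⟨hpmax, hpsq, hplt⟩ := ZsigAux.bad_prime_facts hi hi6 hpp hpe hpi
  have hpltc : p < c := by omega
  set d := c / p with hd
  have hcd : c = p * d := (Nat.mul_div_cancel' hpc).symm
  have hd2 : 2 ≤ d := by
    rcases Nat.lt_or_ge d 2 with h | h
    · interval_cases d
      · omega
      · omega
    · exact h
  set r := d.minFac with hr
  have hrp : r.Prime := Nat.minFac_prime (by omega : d ≠ 1)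
  have hrd : r ∣ d := Nat.minFac_dvd d
  have hrc : r ∣ c := hrd.trans (Dvd.intro_left p hcd.symm)
  have hre : (r : ℤ) ∣ e := by
    rw [← hcast]
    exact_mod_cast Int.natCast_dvd_natCast.mpr hrc
  have hri := hbad r hrp hre
  obtain ⟨hrmax, _, _⟩ := ZsigAux.bad_prime_facts hi hi6 hrp hre hri
  have hrpeq : r = p := by
    by_contra hne
    have h1 := hpmax r hrp hri hne
    have h2 := hrmax p hpp hpi (Ne.symm hne)
    omega
  have hsq : p * p ∣ c := by
    rw [hcd]
    exact mul_dvd_mul_left p (hrpeq ▸ hrd)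
  have hsqz : (p : ℤ) ^ 2 ∣ e := by
    rw [← hcast]
    have : ((p * p : ℕ) : ℤ) ∣ ((c : ℕ) : ℤ) := Int.natCast_dvd_natCast.mpr hsq
    push_cast at this
    rw [sq]
    exact_mod_cast this
  exact hpsq hsqz
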